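/- Let R be a unital non-associative ring, σ a unital ring endomorphism of R, and δ a σ-derivation of R. Define additive maps π_i^m : R → R for integers i and natural numbers m by π_0^0 = id_R, π_i^m = 0 whenever i < 0 or i > m, and π_l^{m+1} = π_{l-1}^m ∘ σ + π_l^m ∘ δ. Then for all a, b ∈ R and all natural numbers l, m, n, one has Σ_{i∈ℕ} π_i^m(a · π_{l-i}^n(b)) = Σ_{i∈ℕ} π_i^m(a) · π_l^{i+n}(b), where both sums have only finitely many nonzero terms. -/
import Mathlib


/-- A non-unital hom-associative ring structure on an additive abelian group `R`:
a biadditive multiplication `mul` and an additive twisting map `α` satisfying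
`α a * (b * c) = (a * b) * α c`. -/
structure IsHomRing {R : Type*} [AddCommGroup R] (mul : R → R → R) (α : R → R) : Prop where
  add_mul : ∀ a b c : R, mul (a + b) c = mul a c + mul b c
  mul_add : ∀ a b c : R, mul a (b + c) = mul a b + mul a c
  alpha_add : ∀ a b : R, α (a + b) = α a + α b
  hom_assoc : ∀ a b c : R, mul (α a) (mul b c) = mul (mul a b) (α c)

/-- A right `R`-hom-module structure on an additive abelian group `M`:
a biadditive scalar multiplication `smul : M → R → M` and an additive map `αM`
satisfying `αM m • (r * s) = (m • r) • αR s`. -/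
structure IsHomModule {R M : Type*} [AddCommGroup R] [AddCommGroup M]
    (mul : R → R → R) (αR : R → R) (smul : M → R → M) (αM : M → M) : Prop where
  add_smul : ∀ (m n : M) (r : R), smul (m + n) r = smul m r + smul n r
  smul_add : ∀ (m : M) (r s : R), smul m (r + s) = smul m r + smul m s
  alpha_add : ∀ m n : M, αM (m + n) = αM m + αM n
  hom_assoc : ∀ (m : M) (r s : R), smul (αM m) (mul r s) = smul (smul m r) (αR s)

/-- A hom-submodule: an additive subgroup (as a set) closed under the scalar
multiplication and invariant under the twisting map. -/
structure IsHomSubmodule {R M : Type*} [AddCommGroup M]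
    (smul : M → R → M) (αM : M → M) (N : Set M) : Prop where
  zero_mem : (0 : M) ∈ N
  add_mem : ∀ a b : M, a ∈ N → b ∈ N → a + b ∈ N
  neg_mem : ∀ a : M, a ∈ N → -a ∈ N
  smul_mem : ∀ a : M, a ∈ N → ∀ r : R, smul a r ∈ N
  alpha_mem : ∀ a : M, a ∈ N → αM a ∈ N

/-- A morphism of right `R`-hom-modules: an additive map commuting with the
twisting maps and preserving scalar multiplication. -/
def IsHomModuleHom {R M M' : Type*} [AddCommGroup M] [AddCommGroup M']
    (smul : M → R → M) (αM : M → M) (smul' : M' → R → M') (αM' : M' → M')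
    (f : M → M') : Prop :=
  (∀ a b : M, f (a + b) = f a + f b) ∧ (∀ m : M, f (αM m) = αM' (f m)) ∧
    ∀ (m : M) (r : R), f (smul m r) = smul' (f m) r

/-- A right hom-module is hom-noetherian if it has no infinite strictly
ascending chain of hom-submodules. -/
def HomNoetherian {R M : Type*} [AddCommGroup M] (smul : M → R → M) (αM : M → M) : Prop :=
  ¬ ∃ c : ℕ → Set M, (∀ n, IsHomSubmodule smul αM (c n)) ∧ ∀ n, c n ⊂ c (n + 1)

/-- the π-function summation identity
Σ_{i∈ℕ} π_i^m(a · π_{l-i}^n(b)) = Σ_{i∈ℕ} π_i^m(a) · π_l^{i+n}(b),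
where both sums have only finitely many nonzero terms. -/
theorem pi_sum_identity {R : Type*} [AddCommGroup R] (mul : R → R → R) (one : R)
    (hadd_mul : ∀ a b c : R, mul (a + b) c = mul a c + mul b c)
    (hmul_add : ∀ a b c : R, mul a (b + c) = mul a b + mul a c)
    (hone : ∀ a : R, mul one a = a) (hone' : ∀ a : R, mul a one = a)
    (σ δ : R → R)
    (hσadd : ∀ a b : R, σ (a + b) = σ a + σ b)
    (hσmul : ∀ a b : R, σ (mul a b) = mul (σ a) (σ b))
    (hσone : σ one = one)
    (hδadd : ∀ a b : R, δ (a + b) = δ a + δ b)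
    (hδ : ∀ a b : R, δ (mul a b) = mul (σ a) (δ b) + mul (δ a) b)
    (π : ℕ → ℤ → R → R)
    (hπadd : ∀ (m : ℕ) (i : ℤ) (a b : R), π m i (a + b) = π m i a + π m i b)
    (hbase : ∀ a : R, π 0 0 a = a)
    (hzero : ∀ (m : ℕ) (i : ℤ), i < 0 ∨ (m : ℤ) < i → ∀ a : R, π m i a = 0)
    (hrec : ∀ (m : ℕ) (l : ℤ) (a : R), π (m + 1) l a = π m (l - 1) (σ a) + π m l (δ a)) :
    ∀ (l m n : ℕ) (a b : R),
      {i : ℕ | π m (i : ℤ) (mul a (π n ((l : ℤ) - (i : ℤ)) b)) ≠ 0}.Finite ∧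
      {i : ℕ | mul (π m (i : ℤ) a) (π (i + n) (l : ℤ) b) ≠ 0}.Finite ∧
      (∑ᶠ i : ℕ, π m (i : ℤ) (mul a (π n ((l : ℤ) - (i : ℤ)) b))) =
        ∑ᶠ i : ℕ, mul (π m (i : ℤ) a) (π (i + n) (l : ℤ) b) := by 
  -- basic zero lemmas
  have mul0l : ∀ c : R, mul 0 c = 0 := by
    intro c
    have h := hadd_mul 0 0 c
    rw [add_zero] at h
    exact left_eq_add.mp h
  have σ0 : σ 0 = 0 := by
    have h := hσadd 0 0; rw [add_zero] at h; exact left_eq_add.mp h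
  have δ0 : δ 0 = 0 := by
    have h := hδadd 0 0; rw [add_zero] at h; exact left_eq_add.mp h
  have pi0 : ∀ (j : ℤ) (a : R), π 0 j a = if j = 0 then a else 0 := by
    intro j a
    by_cases h : j = 0
    · simp [h, hbase]
    · rw [if_neg h]; exact hzero 0 j (by omega) a
  have comm : ∀ (m : ℕ) (l : ℤ) (a : R),
      π (m + 1) l a = σ (π m (l - 1) a) + δ (π m l a) := by
    intro m
    induction m with
    | zero =>
      intro l a
      rw [hrec]
      simp only [pi0]
      split_ifs <;> simp [σ0, δ0] <;> omega
    | succ m ih =>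
      intro l a
      rw [hrec, ih, ih, hrec m (l - 1) a, hrec m l a, hσadd, hδadd]
      abel
  have key : ∀ (m : ℕ) (l : ℤ) (n : ℕ) (a b : R),
      (∑ i ∈ Finset.range (m + 1), π m (i : ℤ) (mul a (π n (l - (i : ℤ)) b))) =
      ∑ i ∈ Finset.range (m + 1), mul (π m (i : ℤ) a) (π (i + n) l b) := by
    intro m
    induction m with
    | zero =>
      intro l n a b
      simp [hbase]
    | succ m ih =>
      intro l n a b
      have hA : ∀ i : ℕ, π (m + 1) (i : ℤ) (mul a (π n (l - (i : ℤ)) b))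
          = π m ((i : ℤ) - 1) (mul (σ a) (σ (π n (l - (i : ℤ)) b)))
            + (π m (i : ℤ) (mul (σ a) (δ (π n (l - (i : ℤ)) b)))
              + π m (i : ℤ) (mul (δ a) (π n (l - (i : ℤ)) b))) := by
        intro i
        rw [hrec, hσmul, hδ, hπadd]
      rw [Finset.sum_congr rfl (fun i _ => hA i), Finset.sum_add_distrib,
        Finset.sum_add_distrib]
      have eA : (∑ i ∈ Finset.range (m + 1 + 1),
            π m ((i : ℤ) - 1) (mul (σ a) (σ (π n (l - (i : ℤ)) b))))
          = ∑ i ∈ Finset.range (m + 1),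
            π m (i : ℤ) (mul (σ a) (σ (π n (l - (i : ℤ) - 1) b))) := by
        rw [Finset.sum_range_succ']
        have h0 : π m (((0 : ℕ) : ℤ) - 1) (mul (σ a) (σ (π n (l - ((0 : ℕ) : ℤ)) b))) = 0 :=
          hzero m _ (Or.inl (by norm_num)) _
        rw [h0, add_zero]
        apply Finset.sum_congr rfl
        intro i _
        have h1 : ((i + 1 : ℕ) : ℤ) - 1 = (i : ℤ) := by push_cast; ring
        have h2 : l - ((i + 1 : ℕ) : ℤ) = l - (i : ℤ) - 1 := by push_cast; ring
        rw [h1, h2]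
      have eB : (∑ i ∈ Finset.range (m + 1 + 1),
            π m (i : ℤ) (mul (σ a) (δ (π n (l - (i : ℤ)) b))))
          = ∑ i ∈ Finset.range (m + 1),
            π m (i : ℤ) (mul (σ a) (δ (π n (l - (i : ℤ)) b))) := by
        rw [Finset.sum_range_succ]
        have h0 : π m ((m + 1 : ℕ) : ℤ) (mul (σ a) (δ (π n (l - ((m + 1 : ℕ) : ℤ)) b))) = 0 :=
          hzero m _ (Or.inr (by push_cast; omega)) _
        rw [h0, add_zero]
      have eC : (∑ i ∈ Finset.range (m + 1 + 1),
            π m (i : ℤ) (mul (δ a) (π n (l - (i : ℤ)) b)))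
          = ∑ i ∈ Finset.range (m + 1),
            π m (i : ℤ) (mul (δ a) (π n (l - (i : ℤ)) b)) := by
        rw [Finset.sum_range_succ]
        have h0 : π m ((m + 1 : ℕ) : ℤ) (mul (δ a) (π n (l - ((m + 1 : ℕ) : ℤ)) b)) = 0 :=
          hzero m _ (Or.inr (by push_cast; omega)) _
        rw [h0, add_zero]
      rw [eA, eB, eC, ← add_assoc]
      have eAB : (∑ i ∈ Finset.range (m + 1),
            π m (i : ℤ) (mul (σ a) (σ (π n (l - (i : ℤ) - 1) b))))
          + (∑ i ∈ Finset.range (m + 1),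
            π m (i : ℤ) (mul (σ a) (δ (π n (l - (i : ℤ)) b))))
          = ∑ i ∈ Finset.range (m + 1),
            π m (i : ℤ) (mul (σ a) (π (n + 1) (l - (i : ℤ)) b)) := by
        rw [← Finset.sum_add_distrib]
        apply Finset.sum_congr rfl
        intro i _
        rw [comm n (l - (i : ℤ)) b, hmul_add, hπadd]
      rw [eAB, ih l (n + 1) (σ a) b, ih l n (δ a) b]
      -- now the right-hand side
      have h1 : ∀ i : ℕ, mul (π (m + 1) (i : ℤ) a) (π (i + n) l b)
          = mul (π m ((i : ℤ) - 1) (σ a)) (π (i + n) l b)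
            + mul (π m (i : ℤ) (δ a)) (π (i + n) l b) := by
        intro i; rw [hrec, hadd_mul]
      have eD : (∑ i ∈ Finset.range (m + 1 + 1),
            mul (π m ((i : ℤ) - 1) (σ a)) (π (i + n) l b))
          = ∑ i ∈ Finset.range (m + 1),
            mul (π m (i : ℤ) (σ a)) (π (i + (n + 1)) l b) := by
        rw [Finset.sum_range_succ']
        have h0 : mul (π m (((0 : ℕ) : ℤ) - 1) (σ a)) (π (0 + n) l b) = 0 := by
          rw [hzero m _ (Or.inl (by norm_num)), mul0l]
        rw [h0, add_zero]
        apply Finset.sum_congr rfl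
        intro i _
        have h2 : ((i + 1 : ℕ) : ℤ) - 1 = (i : ℤ) := by push_cast; ring
        have h3 : i + 1 + n = i + (n + 1) := by omega
        rw [h2, h3]
      have eE : (∑ i ∈ Finset.range (m + 1 + 1),
            mul (π m (i : ℤ) (δ a)) (π (i + n) l b))
          = ∑ i ∈ Finset.range (m + 1),
            mul (π m (i : ℤ) (δ a)) (π (i + n) l b) := by
        rw [Finset.sum_range_succ]
        have h0 : mul (π m ((m + 1 : ℕ) : ℤ) (δ a)) (π (m + 1 + n) l b) = 0 := by
          rw [hzero m _ (Or.inr (by push_cast; omega)), mul0l]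
        rw [h0, add_zero]
      rw [Finset.sum_congr rfl (fun i _ => h1 i), Finset.sum_add_distrib, eD, eE]
  intro l m n a b
  have hsupL : (Function.support fun i : ℕ =>
      π m (i : ℤ) (mul a (π n ((l : ℤ) - (i : ℤ)) b))) ⊆ ↑(Finset.range (m + 1)) := by
    intro i hi
    simp only [Function.mem_support] at hi
    simp only [Finset.coe_range, Set.mem_Iio]
    by_contra h
    exact hi (hzero m (i : ℤ) (Or.inr (by omega)) _)
  have hsupR : (Function.support fun i : ℕ =>
      mul (π m (i : ℤ) a) (π (i + n) (l : ℤ) b)) ⊆ ↑(Finset.range (m + 1)) := by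
    intro i hi
    simp only [Function.mem_support] at hi
    simp only [Finset.coe_range, Set.mem_Iio]
    by_contra h
    apply hi
    rw [hzero m (i : ℤ) (Or.inr (by omega)), mul0l]
  refine ⟨(Finset.range (m + 1)).finite_toSet.subset hsupL,
    (Finset.range (m + 1)).finite_toSet.subset hsupR, ?_⟩
  rw [finsum_eq_sum_of_support_subset _ hsupL, finsum_eq_sum_of_support_subset _ hsupR]
  exact key m (l : ℤ) n a b
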